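/- Let Υ be a σ-finite Borel measure on (0, ∞) such that ∫ min(1, w) Υ(dw) < ∞, and let z₀ > 0. Then ∫_0^{z₀} z^{-1} ∫_{(0,∞)} (1 - e^{-z w}) Υ(dw) dz < ∞ if and only if ∫_{(0,∞)} log(1 + w) Υ(dw) < ∞. -/

import Mathlib

open MeasureTheory Set ENNReal

private lemma exp_bound_low {x : ℝ} (hx : 0 ≤ x) : x / (1 + x) ≤ 1 - Real.exp (-x) := by
  have h1 : (0:ℝ) < 1 + x := by linarith
  have he : 1 + x ≤ Real.exp x := by linarith [Real.add_one_le_exp x]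
  have h2 : Real.exp (-x) ≤ (1 + x)⁻¹ := by
    rw [Real.exp_neg]
    exact inv_anti₀ h1 he
  have hid : x / (1 + x) = 1 - (1 + x)⁻¹ := by field_simp; ring
  rw [hid]; linarith

private lemma exp_bound_high {x : ℝ} (hx : 0 ≤ x) : 1 - Real.exp (-x) ≤ 2 * (x / (1 + x)) := by
  have h1 : (0:ℝ) < 1 + x := by linarith
  have hexp : 1 - x ≤ Real.exp (-x) := by linarith [Real.add_one_le_exp (-x)]
  have hpos : 0 < Real.exp (-x) := Real.exp_pos _
  rw [← mul_div_assoc, le_div_iff₀ h1]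
  rcases le_total x 1 with h | h
  · nlinarith
  · nlinarith

private lemma log_le_nat_mul_log {c w : ℝ} (hw : 0 ≤ w) (hc : 0 ≤ c) (n : ℕ) (hcn : c ≤ n) :
    Real.log (1 + c * w) ≤ (n : ℝ) * Real.log (1 + w) := by
  have h1 : (1:ℝ) + c * w ≤ 1 + (n : ℝ) * w := by nlinarith
  have h2 : 1 + (n : ℝ) * w ≤ (1 + w) ^ n := one_add_mul_le_pow (by linarith) n
  calc Real.log (1 + c * w) ≤ Real.log ((1 + w) ^ n) :=
        Real.log_le_log (by nlinarith) (h1.trans h2)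
    _ = (n : ℝ) * Real.log (1 + w) := by rw [Real.log_pow]

private lemma interval_integral_div_one_add {w z₀ : ℝ} (hw : 0 < w) (hz₀ : 0 < z₀) :
    ∫ z in (0:ℝ)..z₀, w / (1 + z * w) = Real.log (1 + z₀ * w) := by
  have hpos : ∀ z ∈ Set.uIcc (0:ℝ) z₀, 0 < 1 + z * w := by
    intro z hz
    rw [Set.uIcc_of_le hz₀.le] at hz
    nlinarith [hz.1]
  have hd : ∀ z ∈ Set.uIcc (0:ℝ) z₀,
      HasDerivAt (fun z => Real.log (1 + z * w)) (w / (1 + z * w)) z := by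
    intro z hz
    have h1 : HasDerivAt (fun z : ℝ => 1 + z * w) w z := by
      simpa using ((hasDerivAt_id z).mul_const w).const_add 1
    have := (Real.hasDerivAt_log (hpos z hz).ne').comp z h1
    simpa [div_eq_inv_mul, Function.comp_def] using this
  have hc : ContinuousOn (fun z => w / (1 + z * w)) (Set.uIcc 0 z₀) := by
    refine ContinuousOn.div continuousOn_const ?_ fun z hz => (hpos z hz).ne'
    fun_prop
  rw [intervalIntegral.integral_eq_sub_of_hasDerivAt hd hc.intervalIntegrable]
  simp

/-- Integral test for subcritical immigration (superprocess setting): for a σ-finite measure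
`Υ` on `(0,∞)` with `∫ min(1,w) Υ(dw) < ∞`,
`∫_0^{z₀} z⁻¹ ∫ (1 - e^{-zw}) Υ(dw) dz < ∞ ↔ ∫ log(1 + w) Υ(dw) < ∞`. -/
theorem integral_test_iff_log_moment_superprocess (Υ : Measure ℝ) [SigmaFinite Υ]
    (hΥ : (∫⁻ w in Set.Ioi (0:ℝ), ENNReal.ofReal (min 1 w) ∂Υ) < ⊤)
    (z₀ : ℝ) (hz₀ : 0 < z₀) :
    (∫⁻ z in Set.Ioo (0:ℝ) z₀,
        ENNReal.ofReal z⁻¹ *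
          ∫⁻ w in Set.Ioi (0:ℝ), ENNReal.ofReal (1 - Real.exp (-(z * w))) ∂Υ) < ⊤ ↔
      (∫⁻ w in Set.Ioi (0:ℝ), ENNReal.ofReal (Real.log (1 + w)) ∂Υ) < ⊤ := by
  clear hΥ
  -- Step 1: pull the z⁻¹ factor inside the inner integral.
  have hstep : (∫⁻ z in Set.Ioo (0:ℝ) z₀,
        ENNReal.ofReal z⁻¹ *
          ∫⁻ w in Set.Ioi (0:ℝ), ENNReal.ofReal (1 - Real.exp (-(z * w))) ∂Υ)
      = ∫⁻ z in Set.Ioo (0:ℝ) z₀,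
          ∫⁻ w in Set.Ioi (0:ℝ), ENNReal.ofReal (z⁻¹ * (1 - Real.exp (-(z * w)))) ∂Υ := by
    refine setLIntegral_congr_fun measurableSet_Ioo (fun z hz => ?_)
    rw [← lintegral_const_mul' _ _ ENNReal.ofReal_ne_top]
    refine lintegral_congr fun w => ?_
    rw [ENNReal.ofReal_mul (inv_nonneg.2 hz.1.le)]
  set I := ∫⁻ z in Set.Ioo (0:ℝ) z₀,
      ∫⁻ w in Set.Ioi (0:ℝ), ENNReal.ofReal (z⁻¹ * (1 - Real.exp (-(z * w)))) ∂Υ with hI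
  set J := ∫⁻ z in Set.Ioo (0:ℝ) z₀,
      ∫⁻ w in Set.Ioi (0:ℝ), ENNReal.ofReal (w / (1 + z * w)) ∂Υ with hJdef
  -- Step 2: two-sided comparison between I and J.
  have hJI : J ≤ I := by
    refine lintegral_mono_ae ((ae_restrict_iff' measurableSet_Ioo).2
      (Filter.Eventually.of_forall fun z hz => ?_))
    refine lintegral_mono_ae ((ae_restrict_iff' measurableSet_Ioi).2
      (Filter.Eventually.of_forall fun w hw => ?_))
    have hz0 : (0:ℝ) < z := hz.1
    have hw0 : (0:ℝ) < w := hw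
    have hden : (0:ℝ) < 1 + z * w := by positivity
    apply ENNReal.ofReal_le_ofReal
    have hx := exp_bound_low (x := z * w) (by positivity)
    calc w / (1 + z * w) = z⁻¹ * (z * w / (1 + z * w)) := by field_simp
      _ ≤ z⁻¹ * (1 - Real.exp (-(z * w))) :=
        mul_le_mul_of_nonneg_left hx (inv_nonneg.2 hz0.le)
  have hIJ : I ≤ 2 * J := by
    rw [hJdef, ← lintegral_const_mul' _ _ (by norm_num : (2:ℝ≥0∞) ≠ ⊤)]
    refine lintegral_mono_ae ((ae_restrict_iff' measurableSet_Ioo).2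
      (Filter.Eventually.of_forall fun z hz => ?_))
    rw [← lintegral_const_mul' _ _ (by norm_num : (2:ℝ≥0∞) ≠ ⊤)]
    refine lintegral_mono_ae ((ae_restrict_iff' measurableSet_Ioi).2
      (Filter.Eventually.of_forall fun w hw => ?_))
    have hz0 : (0:ℝ) < z := hz.1
    have hw0 : (0:ℝ) < w := hw
    have hden : (0:ℝ) < 1 + z * w := by positivity
    have h2 : (2:ℝ≥0∞) = ENNReal.ofReal 2 := by norm_num
    rw [h2, ← ENNReal.ofReal_mul (by norm_num)]
    apply ENNReal.ofReal_le_ofReal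
    have hx := exp_bound_high (x := z * w) (by positivity)
    calc z⁻¹ * (1 - Real.exp (-(z * w))) ≤ z⁻¹ * (2 * (z * w / (1 + z * w))) :=
          mul_le_mul_of_nonneg_left hx (inv_nonneg.2 hz0.le)
      _ = 2 * (w / (1 + z * w)) := by field_simp
  -- Step 3: Tonelli and the explicit z-integral.
  have hmeas : AEMeasurable (Function.uncurry fun z w => ENNReal.ofReal (w / (1 + z * w)))
      (((volume : Measure ℝ).restrict (Set.Ioo 0 z₀)).prod (Υ.restrict (Set.Ioi 0))) := by
    apply Measurable.aemeasurable
    apply Measurable.ennreal_ofReal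
    exact (measurable_snd.div ((measurable_const.add
      (measurable_fst.mul measurable_snd)) : Measurable fun p : ℝ × ℝ => 1 + p.1 * p.2))
  have hswap : J = ∫⁻ w in Set.Ioi (0:ℝ),
      (∫⁻ z in Set.Ioo (0:ℝ) z₀, ENNReal.ofReal (w / (1 + z * w))) ∂Υ :=
    lintegral_lintegral_swap hmeas
  have hinner : ∀ w ∈ Set.Ioi (0:ℝ),
      (∫⁻ z in Set.Ioo (0:ℝ) z₀, ENNReal.ofReal (w / (1 + z * w)))
        = ENNReal.ofReal (Real.log (1 + z₀ * w)) := by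
    intro w hw
    have hw0 : (0:ℝ) < w := hw
    have hpos : ∀ z ∈ Set.Icc (0:ℝ) z₀, 0 < 1 + z * w := by
      intro z hz; nlinarith [hz.1]
    have hc : ContinuousOn (fun z => w / (1 + z * w)) (Set.Icc 0 z₀) := by
      refine ContinuousOn.div continuousOn_const ?_ fun z hz => (hpos z hz).ne'
      fun_prop
    have hint : IntegrableOn (fun z => w / (1 + z * w)) (Set.Ioo 0 z₀) :=
      (hc.integrableOn_Icc).mono_set Set.Ioo_subset_Icc_self
    have hnn : 0 ≤ᵐ[(volume : Measure ℝ).restrict (Set.Ioo 0 z₀)]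
        fun z => w / (1 + z * w) := by
      refine (ae_restrict_iff' measurableSet_Ioo).2
        (Filter.Eventually.of_forall fun z hz => ?_)
      have := hpos z ⟨hz.1.le, hz.2.le⟩
      positivity
    rw [← ofReal_integral_eq_lintegral_ofReal hint hnn]
    congr 1
    rw [← integral_Ioc_eq_integral_Ioo, ← intervalIntegral.integral_of_le hz₀.le,
      interval_integral_div_one_add hw0 hz₀]
  have hJ2 : J = ∫⁻ w in Set.Ioi (0:ℝ), ENNReal.ofReal (Real.log (1 + z₀ * w)) ∂Υ := by
    rw [hswap]
    exact setLIntegral_congr_fun measurableSet_Ioi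
      (fun w hw => hinner w hw)
  -- Step 4: compare log(1 + z₀ w) with log(1 + w) up to constants.
  set L := ∫⁻ w in Set.Ioi (0:ℝ), ENNReal.ofReal (Real.log (1 + w)) ∂Υ with hL
  obtain ⟨n, hn⟩ : ∃ n : ℕ, z₀ ≤ n := exists_nat_ge z₀
  obtain ⟨m, hm⟩ : ∃ m : ℕ, z₀⁻¹ ≤ m := exists_nat_ge z₀⁻¹
  have hJL : J ≤ (n : ℝ≥0∞) * L := by
    rw [hJ2, hL, ← lintegral_const_mul' _ _ (by simp : (n : ℝ≥0∞) ≠ ⊤)]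
    refine lintegral_mono_ae ((ae_restrict_iff' measurableSet_Ioi).2
      (Filter.Eventually.of_forall fun w hw => ?_))
    have hw0 : (0:ℝ) < w := hw
    have : (n : ℝ≥0∞) = ENNReal.ofReal n := by simp
    rw [this, ← ENNReal.ofReal_mul (Nat.cast_nonneg n)]
    exact ENNReal.ofReal_le_ofReal (log_le_nat_mul_log hw0.le hz₀.le n hn)
  have hLJ : L ≤ (m : ℝ≥0∞) * J := by
    rw [hJ2, hL, ← lintegral_const_mul' _ _ (by simp : (m : ℝ≥0∞) ≠ ⊤)]
    refine lintegral_mono_ae ((ae_restrict_iff' measurableSet_Ioi).2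
      (Filter.Eventually.of_forall fun w hw => ?_))
    have hw0 : (0:ℝ) < w := hw
    have hcast : (m : ℝ≥0∞) = ENNReal.ofReal m := by simp
    rw [hcast, ← ENNReal.ofReal_mul (Nat.cast_nonneg m)]
    refine ENNReal.ofReal_le_ofReal ?_
    have key := log_le_nat_mul_log (w := z₀ * w) (c := z₀⁻¹) (by positivity)
      (inv_nonneg.2 hz₀.le) m hm
    have : z₀⁻¹ * (z₀ * w) = w := by field_simp
    rwa [this] at key
  -- Conclusion.
  rw [hstep]
  constructor
  · intro h
    have hJfin : J < ⊤ := lt_of_le_of_lt hJI h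
    exact lt_of_le_of_lt hLJ (ENNReal.mul_lt_top (by simp) hJfin)
  · intro h
    have hJfin : J < ⊤ := lt_of_le_of_lt hJL (ENNReal.mul_lt_top (by simp) h)
    exact lt_of_le_of_lt hIJ (ENNReal.mul_lt_top (by norm_num) hJfin)
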